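/- Let G be a graph with |V(G)| ≥ 2 and let M be a module of G. Then the strong modules of G[M] are exactly the strong modules of G that are properly contained in M, together with M itself. -/

import Mathlib

/-- `M` is a module of `G`: every vertex outside `M` is adjacent to all of `M` or to none. -/
def SimpleGraph.IsModule {V : Type*} (G : SimpleGraph V) (M : Set V) : Prop :=
  ∀ v ∉ M, (∀ m ∈ M, G.Adj v m) ∨ (∀ m ∈ M, ¬ G.Adj v m)

/-- `G` is prime: at least 4 vertices and all modules are trivial. -/
def SimpleGraph.IsPrimeGraph {V : Type*} [Fintype V] (G : SimpleGraph V) : Prop :=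
  4 ≤ Fintype.card V ∧
    ∀ M : Set V, G.IsModule M → M = ∅ ∨ (∃ v, M = {v}) ∨ M = Set.univ

/-- `H` on `V ⊕ W` is an extension of `G` on `V`: it induces `G` on the `inl` copy of `V`. -/
def SimpleGraph.IsExtension {V W : Type*} (G : SimpleGraph V) (H : SimpleGraph (V ⊕ W)) : Prop :=
  ∀ u v : V, H.Adj (Sum.inl u) (Sum.inl v) ↔ G.Adj u v

/-- The prime bound of `G`: the least `p` such that `G` has a prime `p`-extension. -/
noncomputable def SimpleGraph.primeBound {V : Type*} [Fintype V] (G : SimpleGraph V) : ℕ :=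
  sInf {p : ℕ | ∃ H : SimpleGraph (V ⊕ Fin p), G.IsExtension H ∧ H.IsPrimeGraph}

/-- The modular clique number: largest size of a module of `G` that is a clique. -/
noncomputable def SimpleGraph.modularCliqueNumber {V : Type*} [Fintype V]
    (G : SimpleGraph V) : ℕ :=
  sSup {n : ℕ | ∃ M : Set V, G.IsModule M ∧ G.IsClique M ∧ M.ncard = n}

/-- The modular stability number: `ω_M` of the complement. -/
noncomputable def SimpleGraph.modularStabilityNumber {V : Type*} [Fintype V]
    (G : SimpleGraph V) : ℕ :=
  Gᶜ.modularCliqueNumber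

/-- The number of isolated vertices of `G`. -/
noncomputable def SimpleGraph.isolatedCount {V : Type*} [Fintype V] (G : SimpleGraph V) : ℕ :=
  {v : V | ∀ w, ¬ G.Adj v w}.ncard

/-- `P` is a modular partition of `G`. -/
def SimpleGraph.IsModularPartition {V : Type*} (G : SimpleGraph V) (P : Set (Set V)) : Prop :=
  (∀ X ∈ P, X.Nonempty) ∧ ⋃₀ P = Set.univ ∧ P.Pairwise Disjoint ∧ ∀ X ∈ P, G.IsModule X

/-- The quotient graph `G/P` of a (modular) partition `P`. -/
def SimpleGraph.quotientGraph {V : Type*} (G : SimpleGraph V) (P : Set (Set V)) :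
    SimpleGraph P where
  Adj X Y := (X : Set V) ≠ (Y : Set V) ∧ ∃ u ∈ (X : Set V), ∃ v ∈ (Y : Set V), G.Adj u v
  symm := by
    refine ⟨?_⟩
    rintro X Y ⟨hne, u, hu, v, hv, h⟩
    exact ⟨fun h' => hne h'.symm, v, hv, u, hu, h.symm⟩
  loopless := by
    refine ⟨?_⟩
    rintro X ⟨hne, -⟩
    exact hne rfl

/-- `M` is a strong module of `G`. -/
def SimpleGraph.IsStrongModule {V : Type*} (G : SimpleGraph V) (M : Set V) : Prop :=
  G.IsModule M ∧ ∀ N : Set V, G.IsModule N → (M ∩ N).Nonempty → M ⊆ N ∨ N ⊆ M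

lemma module_image {V : Type*} (G : SimpleGraph V) {M : Set V} (hM : G.IsModule M)
    {Q : Set M} (hQ : (G.induce M).IsModule Q) : G.IsModule (Subtype.val '' Q) := by
  intro v hv
  by_cases hvM : v ∈ M
  · rcases hQ ⟨v, hvM⟩ (fun h => hv ⟨_, h, rfl⟩) with h | h
    · left; rintro m ⟨m', hm', rfl⟩; exact h m' hm'
    · right; rintro m ⟨m', hm', rfl⟩; exact h m' hm'
  · rcases hM v hvM with h | h
    · left; rintro m ⟨m', hm', rfl⟩; exact h _ m'.2
    · right; rintro m ⟨m', hm', rfl⟩; exact h _ m'.2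

lemma module_preimage {V : Type*} (G : SimpleGraph V) (M : Set V) {P : Set V}
    (hP : G.IsModule P) : (G.induce M).IsModule (Subtype.val ⁻¹' P) := by
  intro v hv
  rcases hP ↑v hv with h | h
  · left; intro m hm; exact h ↑m hm
  · right; intro m hm; exact h ↑m hm

lemma module_diff {V : Type*} (G : SimpleGraph V) {A B : Set V}
    (hA : G.IsModule A) (hB : G.IsModule B) {y : V} (hyB : y ∈ B) (hyA : y ∉ A) :
    G.IsModule (A \ B) := by
  intro v hv
  by_cases hvA : v ∈ A
  · have hvB : v ∈ B := by by_contra h; exact hv ⟨hvA, h⟩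
    rcases hA y hyA with h | h
    · left; rintro m ⟨hmA, hmB⟩
      rcases hB m hmB with h' | h'
      · exact (h' v hvB).symm
      · exact absurd (h m hmA).symm (h' y hyB)
    · right; rintro m ⟨hmA, hmB⟩
      rcases hB m hmB with h' | h'
      · exact absurd ((h' y hyB).symm) (h m hmA)
      · intro hadj; exact h' v hvB hadj.symm
  · rcases hA v hvA with h | h
    · left; rintro m ⟨hmA, _⟩; exact h m hmA
    · right; rintro m ⟨hmA, _⟩; exact h m hmA

/-- the strong modules of `G[M]` are exactly the strong modules of `G`
properly contained in `M`, together with `M` itself. -/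
theorem strong_modules_of_induced {V : Type*} (G : SimpleGraph V)
    (hcard : 2 ≤ Nat.card V) (M : Set V) (hM : G.IsModule M) :
    ∀ N : Set M, (G.induce M).IsStrongModule N ↔
      ((G.IsStrongModule (Subtype.val '' N) ∧ Subtype.val '' N ⊂ M) ∨
        Subtype.val '' N = M) := by
  intro N
  have hsub : Subtype.val '' N ⊆ M := by rintro _ ⟨n, _, rfl⟩; exact n.2
  constructor
  · rintro ⟨hNmod, hNstrong⟩
    by_cases hNM : Subtype.val '' N = M
    · right; exact hNM
    · left
      refine ⟨⟨module_image G hM hNmod, ?_⟩, ⟨hsub, fun h => hNM (subset_antisymm hsub h)⟩⟩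
      rintro P hP ⟨x, hxN, hxP⟩
      obtain ⟨x', hx'N, rfl⟩ := hxN
      have hPM : (G.induce M).IsModule (Subtype.val ⁻¹' P) := module_preimage G M hP
      rcases hNstrong _ hPM ⟨x', hx'N, hxP⟩ with h | h
      · left; rintro _ ⟨n, hn, rfl⟩; exact h hn
      · by_cases hPsub : P ⊆ M
        · right; intro p hp; exact ⟨⟨p, hPsub hp⟩, h hp, rfl⟩
        · rw [Set.not_subset] at hPsub
          obtain ⟨y, hyP, hyM⟩ := hPsub
          have hMP : G.IsModule (M \ P) := module_diff G hM hP hyP hyM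
          have hMP' : (G.induce M).IsModule (Subtype.val ⁻¹' (M \ P)) :=
            module_preimage G M hMP
          by_cases hint : (N ∩ Subtype.val ⁻¹' (M \ P)).Nonempty
          · rcases hNstrong _ hMP' hint with h2 | h2
            · exact absurd hxP (h2 hx'N).2
            · exfalso
              apply hNM
              refine subset_antisymm hsub (fun m hm => ?_)
              by_cases hmP : m ∈ P
              · exact ⟨⟨m, hm⟩, h hmP, rfl⟩
              · exact ⟨⟨m, hm⟩, h2 ⟨hm, hmP⟩, rfl⟩
          · left; rintro _ ⟨n, hn, rfl⟩
            by_contra hnP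
            exact hint ⟨n, hn, ⟨n.2, hnP⟩⟩
  · rintro (⟨⟨hmod, hstrong⟩, hss⟩ | hEq)
    · constructor
      · have := module_preimage G M hmod
        rwa [Set.preimage_image_eq _ Subtype.val_injective] at this
      · rintro Q hQ ⟨z, hzN, hzQ⟩
        have hQ' : G.IsModule (Subtype.val '' Q) := module_image G hM hQ
        rcases hstrong _ hQ' ⟨↑z, ⟨z, hzN, rfl⟩, ⟨z, hzQ, rfl⟩⟩ with h | h
        · left; intro n hn
          obtain ⟨q, hq, he⟩ := h ⟨n, hn, rfl⟩
          exact Subtype.val_injective he ▸ hq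
        · right; intro q hq
          obtain ⟨n, hn, he⟩ := h ⟨q, hq, rfl⟩
          exact Subtype.val_injective he ▸ hn
    · have hNuniv : N = Set.univ := by
        ext x
        simp only [Set.mem_univ, iff_true]
        have : ↑x ∈ Subtype.val '' N := by rw [hEq]; exact x.2
        obtain ⟨n, hn, he⟩ := this
        exact Subtype.val_injective he ▸ hn
      subst hNuniv
      constructor
      · intro v hv; exact absurd (Set.mem_univ v) hv
      · intro Q _ _; right; exact Set.subset_univ Q
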